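/- Let C be a category with a terminal object and an initial object, and suppose C is pointed (initial ≅ terminal). In the arrow category Ar(C) = Fun(Δ¹, C) of a category C with kernels and cokernels (e.g., C abelian or pointed with finite limits and colimits), the cokernel functor cok : Ar(C) → Ar(C), (f : X → Y) ↦ (Y → coker f), is left adjoint to the kernel functor ker : Ar(C) → Ar(C), (f : X → Y) ↦ (ker f → X). -/

import Mathlib

open CategoryTheory Limits

noncomputable section

universe v u

variable (C : Type u) [Category.{v} C] [HasZeroObject C] [HasZeroMorphisms C]
  [HasKernels C] [HasCokernels C]

/-- The cokernel endofunctor on the arrow category: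
`(f : X → Y) ↦ (Y → coker f)`. -/
def cokFunctor : Arrow C ⥤ Arrow C where
  obj f := Arrow.mk (cokernel.π f.hom)
  map {f g} sq :=
    Arrow.homMk (u := sq.right)
      (v := cokernel.map f.hom g.hom sq.left sq.right sq.w.symm)
      (by simp)

/-- The kernel endofunctor on the arrow category:
`(f : X → Y) ↦ (ker f → X)`. -/
def kerFunctor : Arrow C ⥤ Arrow C where
  obj f := Arrow.mk (kernel.ι f.hom)
  map {f g} sq :=
    Arrow.homMk (u := kernel.map f.hom g.hom sq.left sq.right sq.w.symm)
      (v := sq.left)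
      (by simp)

/-- in the arrow category of a pointed category with kernels and
cokernels, the cokernel functor is left adjoint to the kernel functor. -/
theorem cok_adj_ker : Nonempty (cokFunctor C ⊣ kerFunctor C) := by
  refine ⟨Adjunction.mkOfHomEquiv
    { homEquiv := fun f g =>
        { toFun := fun sq => Arrow.homMk
            (u := kernel.lift g.hom (f.hom ≫ sq.left) (by
              have := sq.w
              simp only [cokFunctor, Arrow.mk_hom, Functor.id_map] at this
              erw [Category.assoc, this, ← Category.assoc, cokernel.condition, zero_comp]))
            (v := sq.left)
            (by simp [kerFunctor, Arrow.Hom.left, Arrow.Hom.right, Arrow.homMk])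
          invFun := fun sq => Arrow.homMk
            (u := sq.right)
            (v := cokernel.desc f.hom (sq.right ≫ g.hom) (by
              have := sq.w
              simp only [kerFunctor, Arrow.mk_hom, Functor.id_map] at this
              erw [← Category.assoc, ← this, Category.assoc, kernel.condition, comp_zero]))
            (by simp [cokFunctor, Arrow.Hom.left, Arrow.Hom.right, Arrow.homMk]; rfl)
          left_inv := fun sq => by
            ext
            · simp [cokFunctor, Arrow.Hom.left, Arrow.Hom.right, Arrow.homMk, Comma.comp_left, Comma.comp_right]
            · apply coequalizer.hom_ext
              have := sq.w
              simp only [cokFunctor, Arrow.mk_hom, Functor.id_map] at this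
              simp [cokFunctor, this, Arrow.Hom.left, Arrow.Hom.right, Arrow.homMk]
              exact this
          right_inv := fun sq => by
            ext
            · apply equalizer.hom_ext
              have := sq.w
              simp only [kerFunctor, Arrow.mk_hom, Functor.id_map] at this
              simp [kerFunctor, this, Arrow.Hom.left, Arrow.Hom.right, Arrow.homMk]
            · simp [kerFunctor, Arrow.Hom.left, Arrow.Hom.right, Arrow.homMk] }
      homEquiv_naturality_left_symm := fun sq sq' => by
        ext
        · rfl
        · apply coequalizer.hom_ext
          erw [Equiv.coe_fn_symm_mk, Equiv.coe_fn_symm_mk]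
          simp [cokFunctor, Arrow.Hom.left, Arrow.Hom.right, Arrow.homMk]
          change _ = cokernel.π _ ≫ cokernel.map _ _ sq.left sq.right sq.w.symm ≫ cokernel.desc _ _ _
          simp
          exact Category.assoc _ _ _
      homEquiv_naturality_right := fun sq sq' => by
        ext
        · apply equalizer.hom_ext
          erw [Equiv.coe_fn_mk, Equiv.coe_fn_mk]
          simp [kerFunctor, Arrow.Hom.left, Arrow.Hom.right, Arrow.homMk]
          rfl
        · rfl }⟩

end
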